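/- arXiv:1212.3939 — 8 statements merged into one kernel-verified Lean document; each statement's English description precedes it below -/
import Mathlib

section
/- For any circuit C of a matroid M and any two distinct elements e, f ∈ C, there is a cocircuit D of M such that C ∩ D = {e, f}. -/
open Set

namespace Matroid

variable {α : Type*}

/-- A circuit of a matroid is a minimal dependent set. -/
def Circuit (M : Matroid α) (C : Set α) : Prop :=
  M.Dep C ∧ ∀ D, M.Dep D → D ⊆ C → D = C

/-- A cocircuit is a circuit of the dual matroid. -/
def Cocircuit (M : Matroid α) (D : Set α) : Prop := M✶.Circuit D

/-- The matroid obtained by deleting the set `D`. -/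
def delete' (M : Matroid α) (D : Set α) : Matroid α := M ↾ (M.E \ D)

/-- The matroid obtained by contracting the set `C`. -/
def contract' (M : Matroid α) (C : Set α) : Matroid α := ((M✶).delete' C)✶

/-- `N` is a minor of `M` if it is obtained from `M` by contracting a set `C`
and deleting a set `D`, where `C` and `D` are disjoint subsets of the ground set. -/
def IsMinor' (N M : Matroid α) : Prop :=
  ∃ C D, Disjoint C D ∧ C ∪ D ⊆ M.E ∧ N = (M.contract' C).delete' D

/-- A scrawl is a union of circuits. -/
def Scrawl (M : Matroid α) (W : Set α) : Prop :=
  ∃ S : Set (Set α), (∀ C ∈ S, M.Circuit C) ∧ W = ⋃₀ S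

/-- A matroid is tame if every circuit-cocircuit intersection is finite. -/
def Tame (M : Matroid α) : Prop :=
  ∀ C D, M.Circuit C → M.Cocircuit D → (C ∩ D).Finite

/-- A `k`-painting of a matroid: nonzero coefficients on each circuit and each
cocircuit such that each circuit-cocircuit pair is "orthogonal". -/
def IsPainting {k : Type*} [Field k] (M : Matroid α)
    (c : Set α → α → k) (d : Set α → α → k) : Prop :=
  (∀ C, M.Circuit C → ∀ e ∈ C, c C e ≠ 0) ∧
  (∀ D, M.Cocircuit D → ∀ e ∈ D, d D e ≠ 0) ∧
  (∀ C D, M.Circuit C → M.Cocircuit D →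
    (C ∩ D).Finite ∧ ∑ᶠ e ∈ C ∩ D, c C e * d D e = 0)

end Matroid

/-- For any circuit `C` and distinct `e, f ∈ C` there is a cocircuit meeting `C`
exactly in `{e, f}`. -/
theorem stmt2 {α : Type*} (M : Matroid α) (C : Set α) (hC : M.Circuit C)
    (e f : α) (he : e ∈ C) (hf : f ∈ C) (hef : e ≠ f) :
    ∃ D, M.Cocircuit D ∧ C ∩ D = {e, f} := by
  classical
  have hCE : C ⊆ M.E := hC.1.subset_ground
  -- proper subsets of a circuit are independent
  have hssub : ∀ X ⊆ C, X ≠ C → M.Indep X := by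
    intro X hXC hne
    rw [← Matroid.not_dep_iff (hXC.trans hCE)]
    exact fun hd => hne (hC.2 X hd hXC)
  have hCe : M.Indep (C \ {e}) := by
    refine hssub _ diff_subset fun h => ?_
    have : e ∈ C \ {e} := h.symm ▸ he
    exact this.2 rfl
  obtain ⟨B, hB, hCeB⟩ := hCe.exists_isBase_superset
  have heB : e ∉ B := by
    intro heB
    have hCB : C ⊆ B := by
      intro x hx
      by_cases hxe : x = e
      · exact hxe ▸ heB
      · exact hCeB ⟨hx, hxe⟩
    exact hC.1.not_indep (hB.indep.subset hCB)
  have hfB : f ∈ B := hCeB ⟨hf, hef.symm⟩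
  set H := M.closure (B \ {f}) with hH
  have hBfE : B \ {f} ⊆ M.E := diff_subset.trans hB.subset_ground
  have hBfH : B \ {f} ⊆ H := M.subset_closure _ hBfE
  have hHE : H ⊆ M.E := M.closure_subset_ground _
  have hfH : f ∉ H := hB.indep.notMem_closure_diff_of_mem hfB
  -- f is in the closure of C \ {f}
  have hCf : M.Indep (C \ {f}) := by
    refine hssub _ diff_subset fun h => ?_
    have : f ∈ C \ {f} := h.symm ▸ hf
    exact this.2 rfl
  have hfclC : f ∈ M.closure (C \ {f}) := by
    rw [hCf.mem_closure_iff_of_notMem (fun h => h.2 rfl)]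
    rw [insert_diff_singleton, insert_eq_of_mem hf]
    exact hC.1
  have heH : e ∉ H := by
    intro heH
    have hsub : C \ {f} ⊆ H := by
      intro x hx
      by_cases hxe : x = e
      · exact hxe ▸ heH
      · exact hBfH ⟨hCeB ⟨hx.1, hxe⟩, hx.2⟩
    have : M.closure (C \ {f}) ⊆ H := by
      rw [hH]
      calc M.closure (C \ {f}) ⊆ M.closure H := M.closure_subset_closure hsub
        _ = H := M.closure_closure _
    exact hfH (this hfclC)
  refine ⟨M.E \ H, ⟨?_, ?_⟩, ?_⟩
  · -- M✶.Dep (M.E \ H)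
    rw [Matroid.dep_iff]
    refine ⟨fun hind => ?_, by rw [Matroid.dual_ground]; exact diff_subset⟩
    have hco : M.Coindep (M.E \ H) := hind
    obtain ⟨B', hB', hB'sub⟩ := hco.exists_isBase_subset_compl
    have hB'H : B' ⊆ H := fun x hx =>
      by_contra fun hxH => (hB'sub hx).2 ⟨hB'.subset_ground hx, hxH⟩
    have : M.E ⊆ H := by
      rw [← hB'.closure_eq, hH]
      calc M.closure B' ⊆ M.closure H := M.closure_subset_closure hB'H
        _ = H := M.closure_closure _
    exact hfH (this (hCE hf))
  · -- minimality
    intro D' hD' hD'sub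
    by_contra hne
    obtain ⟨x, hxD, hxD'⟩ : ∃ x, x ∈ M.E \ H ∧ x ∉ D' := by
      by_contra h
      push_neg at h
      exact hne (subset_antisymm hD'sub h)
    have hD'E : D' ⊆ M.E := hD'sub.trans diff_subset
    by_cases hxf : x = f
    · -- B is a base disjoint from D'
      refine hD'.not_indep ?_
      have : M.Coindep D' := by
        rw [Matroid.coindep_iff_exists hD'E]
        refine ⟨B, hB, fun y hy => ⟨hB.subset_ground hy, fun hyD' => ?_⟩⟩
        by_cases hyf : y = f
        · exact (hxf ▸ hxD') (hyf ▸ hyD')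
        · exact (hD'sub hyD').2 (hBfH ⟨hy, hyf⟩)
      exact this
    · have hxB : x ∉ B := fun hxB => hxD.2 (hBfH ⟨hxB, hxf⟩)
      have hxBf : x ∉ B \ {f} := fun h => hxB h.1
      have hind : M.Indep (insert x (B \ {f})) := by
        rw [(hB.indep.diff {f}).insert_indep_iff_of_notMem hxBf]
        exact ⟨hxD.1, hxD.2⟩
      have hB'' : M.IsBase (insert x (B \ {f})) := hB.exchange_isBase_of_indep hxB hind
      refine hD'.not_indep ?_
      have : M.Coindep D' := by
        rw [Matroid.coindep_iff_exists hD'E]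
        refine ⟨_, hB'', fun y hy => ⟨hB''.subset_ground hy, fun hyD' => ?_⟩⟩
        rcases hy with rfl | hy
        · exact hxD' hyD'
        · exact (hD'sub hyD').2 (hBfH hy)
      exact this
  · -- C ∩ (M.E \ H) = {e, f}
    apply subset_antisymm
    · rintro x ⟨hxC, hxE, hxH⟩
      by_contra hx
      rw [mem_insert_iff, mem_singleton_iff] at hx
      push_neg at hx
      exact hxH (hBfH ⟨hCeB ⟨hxC, hx.1⟩, hx.2⟩)
    · rintro x (rfl | rfl)
      · exact ⟨he, hCE he, heH⟩
      · exact ⟨hf, hCE hf, hfH⟩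
end

section
/- Let M' be a minor of a matroid M, let C' be a circuit of M' and D' a cocircuit of M'. Then there is a circuit C of M with C ⊆ C' ∪ (E(M) \ E(M')) and a cocircuit D of M with D ⊆ D' ∪ (E(M) \ E(M')) such that C ∩ D = C' ∩ D'. -/
open Set

namespace Matroid

variable {α : Type*}

/-- The matroid obtained by deleting the set `D`. -/
def delete₀ (M : Matroid α) (D : Set α) : Matroid α := M ↾ (M.E \ D)

/-- The matroid obtained by contracting the set `C`. -/
def contract₀ (M : Matroid α) (C : Set α) : Matroid α := ((M✶).delete₀ C)✶

/-- `N` is a minor of `M` if it is obtained from `M` by contracting a set `C`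
and deleting a set `D`, where `C` and `D` are disjoint subsets of the ground set. -/
def IsMinor₀ (N M : Matroid α) : Prop :=
  ∃ C D, Disjoint C D ∧ C ∪ D ⊆ M.E ∧ N = (M.contract₀ C).delete₀ D

end Matroid


namespace Matroid

variable {α : Type*}

variable {M : Matroid α} {I J K L B C C' X : Set α} {e : α}

lemma contract_ground' (M : Matroid α) (K : Set α) : (M.contract₀ K).E = M.E \ K := rfl

lemma delete_ground' (M : Matroid α) (L : Set α) : (M.delete₀ L).E = M.E \ L := rfl

lemma dual_delete_contract₀ (M : Matroid α) (L : Set α) :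
    (M.delete₀ L).contract₀ L = (M.delete₀ L).contract₀ L := rfl

/-- fundamental circuit -/
lemma exists_circuit_of_dep (hX : M.Dep X) : ∃ C, M.Circuit C ∧ C ⊆ X := by
  obtain ⟨I, hI⟩ := M.exists_isBasis X hX.subset_ground
  have hne : ¬ (X ⊆ I) := fun h => hX.not_indep (hI.indep.subset h)
  obtain ⟨e, heX, heI⟩ := not_subset.mp hne
  have hecl : e ∈ M.closure I := hI.subset_closure heX
  set J := {x ∈ I | e ∉ M.closure (I \ {x})} with hJdef
  have hJI : J ⊆ I := sep_subset _ _
  have hJind : M.Indep J := hI.indep.subset hJI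
  have heJ : e ∉ J := fun h => heI (hJI h)
  have heclJ : e ∈ M.closure J := by
    by_cases hd : (I \ J).Nonempty
    · have hsub : ∀ Y ∈ (fun x => I \ {x}) '' (I \ J), Y ⊆ I := by
        rintro Y ⟨x, -, rfl⟩; exact diff_subset
      have hEq := hI.indep.closure_sInter_eq_biInter_closure_of_forall_subset
        (hd.image _) hsub
      have hJeq : ⋂₀ ((fun x => I \ {x}) '' (I \ J)) = J := by
        apply subset_antisymm
        · intro y hy
          simp only [sInter_image, mem_iInter] at hy
          have hyI : y ∈ I := (hy _ hd.some_mem).1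
          by_contra hyJ
          exact (hy y ⟨hyI, hyJ⟩).2 rfl
        · intro y hyJ
          simp only [sInter_image, mem_iInter]
          rintro x hx
          exact ⟨hJI hyJ, fun h => hx.2 (mem_singleton_iff.mp h ▸ hyJ)⟩
      rw [hJeq] at hEq
      rw [hEq, mem_iInter₂]
      rintro Y ⟨x, hx, rfl⟩
      by_contra h
      exact hx.2 ⟨hx.1, h⟩
    · have : I ⊆ J := fun x hx => by
        by_contra h; exact hd ⟨x, hx, h⟩
      rwa [(hJI.antisymm this)]
  refine ⟨insert e J, ⟨hJind.insert_dep_iff.mpr ⟨heclJ, heJ⟩, ?_⟩,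
    insert_subset heX (hJI.trans hI.subset)⟩
  intro D hD hDC
  by_contra hne'
  obtain ⟨x, hxC, hxD⟩ := not_subset.mp (fun h => hne' (hDC.antisymm h))
  have hDsub : D ⊆ insert e J \ {x} := subset_diff_singleton hDC hxD
  rcases eq_or_ne x e with rfl | hxe
  · have : insert x J \ {x} ⊆ J := by
      intro y hy
      rcases hy.1 with rfl | h
      · exact absurd rfl hy.2
      · exact h
    exact hD.not_indep (hJind.subset (hDsub.trans this))
  · have hxJ : x ∈ J := by
      rcases hxC with rfl | h
      · exact absurd rfl hxe
      · exact h
    have hsub2 : insert e J \ {x} ⊆ insert e (J \ {x}) := by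
      intro y hy
      rcases hy.1 with rfl | h
      · exact mem_insert _ _
      · exact Or.inr ⟨h, hy.2⟩
    have hind : M.Indep (insert e (J \ {x})) := by
      rw [(hJind.subset diff_subset).insert_indep_iff_of_notMem (fun h => heJ h.1)]
      refine ⟨M.mem_ground_of_mem_closure heclJ, fun h => hxJ.2 ?_⟩
      exact M.closure_subset_closure (diff_subset_diff_left hJI) h
    exact hD.not_indep (hind.subset (hDsub.trans hsub2))

lemma Circuit.of_delete (h : (M.delete₀ L).Circuit C) : M.Circuit C := by
  obtain ⟨hdep, hmin⟩ := h
  rw [delete₀, restrict_dep_iff] at hdep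
  refine ⟨⟨hdep.1, hdep.2.trans diff_subset⟩, fun D hD hDC => ?_⟩
  exact hmin D (by rw [delete₀, restrict_dep_iff]; exact ⟨hD.not_indep, hDC.trans hdep.2⟩) hDC

lemma contract_indep_iff' (hK : K ⊆ M.E) :
    (M.contract₀ K).Indep I ↔ I ⊆ M.E \ K ∧ ∃ B, M.IsBase B ∧ M.IsBasis (B ∩ K) K ∧ I ⊆ B := by
  have hR : M.E \ K ⊆ M✶.E := by rw [dual_ground]; exact diff_subset
  rw [contract₀, delete₀, dual_ground, dual_indep_iff_exists']
  simp only [restrict_ground_eq]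
  constructor
  · rintro ⟨hIE, Bd, hBd, hdj⟩
    rw [isBase_restrict_iff hR] at hBd
    obtain ⟨Bd', hBd', hBdBd'⟩ := hBd.indep.exists_isBase_superset
    have hinter : Bd = Bd' ∩ (M.E \ K) :=
      hBd.eq_of_subset_indep (hBd'.indep.subset inter_subset_left)
        (subset_inter hBdBd' hBd.subset) inter_subset_right
    have hbasis := (hBd'.inter_isBasis_iff_compl_inter_isBasis_dual hR).mp (hinter ▸ hBd)
    rw [dual_dual, dual_ground, diff_diff_cancel_left hK] at hbasis
    refine ⟨hIE, M.E \ Bd', hBd'.compl_isBase_of_dual, hbasis, ?_⟩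
    intro x hx
    refine ⟨(hIE hx).1, fun hxBd' => ?_⟩
    exact hdj.ne_of_mem hx (hinter ▸ ⟨hxBd', hIE hx⟩ : _ ∈ Bd) rfl
  · rintro ⟨hIE, B, hB, hBK, hIB⟩
    refine ⟨hIE, (M.E \ B) ∩ (M.E \ K), ?_, ?_⟩
    · rw [isBase_restrict_iff hR]
      exact hB.compl_inter_isBasis_of_inter_isBasis hBK
    · exact Disjoint.mono_right inter_subset_left
        (disjoint_sdiff_right.mono_left hIB)

lemma swap_indep (hB : M.IsBase B) (hJ₂ : M.IsBasis (B ∩ K) K) (hJ : M.IsBasis J K) :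
    M.Indep (B \ K ∪ J) := by
  have hXE : B \ K ∪ J ⊆ M.E :=
    union_subset (diff_subset.trans hB.subset_ground) hJ.indep.subset_ground
  have h1 : B ⊆ M.closure (B \ K ∪ J) := by
    intro x hx
    by_cases hxK : x ∈ K
    · exact M.closure_subset_closure subset_union_right (hJ.subset_closure hxK)
    · exact M.subset_closure _ hXE (Or.inl ⟨hx, hxK⟩)
  have hsp : M.E ⊆ M.closure (B \ K ∪ J) := by
    rw [← hB.closure_eq]
    exact closure_subset_closure_of_subset_closure h1
  obtain ⟨B₆, hB₆, hJB₆⟩ := hJ.indep.subset_isBasis_of_subset subset_union_right hXE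
  have hB₆base : M.IsBase B₆ :=
    hB₆.indep.isBase_of_ground_subset_closure (by rwa [hB₆.closure_eq_closure])
  have hBK₆ : B \ K ⊆ B₆ := by
    intro x hx
    by_contra hxB₆
    obtain ⟨y, hy, hB₇⟩ := hB.exchange hB₆base ⟨hx.1, hxB₆⟩
    have hyK : y ∈ K := by
      rcases hB₆.subset hy.1 with h | h
      · exact absurd h.1 hy.2
      · exact hJ.subset h
    have heq : B ∩ K = insert y (B ∩ K) := by
      refine hJ₂.eq_of_subset_indep ?_ (subset_insert _ _)
        (insert_subset hyK inter_subset_right)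
      refine hB₇.indep.subset (insert_subset_insert ?_)
      exact subset_diff_singleton inter_subset_left (fun h => hx.2 h.2)
    exact hy.2 (heq ▸ (mem_insert y (B ∩ K)) : y ∈ B ∩ K).1
  have hfin : B \ K ∪ J = B₆ := (union_subset hBK₆ hJB₆).antisymm hB₆.subset
  rw [hfin]
  exact hB₆base.indep

lemma circuit_of_contract (hK : K ⊆ M.E) (hC' : (M.contract₀ K).Circuit C') :
    ∃ C, M.Circuit C ∧ C' ⊆ C ∧ C ⊆ C' ∪ K := by
  have hC'E : C' ⊆ M.E \ K := hC'.1.subset_ground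
  obtain ⟨J, hJ⟩ := M.exists_isBasis K hK
  have hdep : M.Dep (C' ∪ J) := by
    rw [dep_iff]
    refine ⟨fun hind => ?_,
      union_subset (hC'E.trans diff_subset) hJ.indep.subset_ground⟩
    obtain ⟨B, hB, hUB⟩ := hind.exists_isBase_superset
    have hBK : J = B ∩ K := hJ.eq_of_subset_indep (hB.indep.subset inter_subset_left)
      (subset_inter (subset_union_right.trans hUB) hJ.subset) inter_subset_right
    exact hC'.1.not_indep ((contract_indep_iff' hK).mpr
      ⟨hC'E, B, hB, hBK ▸ hJ, subset_union_left.trans hUB⟩)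
  obtain ⟨C, hC, hCsub⟩ := exists_circuit_of_dep hdep
  have hCK : C \ K ⊆ C' := fun x hx =>
    (hCsub hx.1).elim id (fun h => absurd (hJ.subset h) hx.2)
  have hdepCK : (M.contract₀ K).Dep (C \ K) := by
    rw [dep_iff]
    constructor
    · intro hind
      obtain ⟨-, B, hB, hBK, hCB⟩ := (contract_indep_iff' hK).mp hind
      refine hC.1.not_indep ((swap_indep hB hBK hJ).subset ?_)
      intro x hxC
      by_cases hxK : x ∈ K
      · refine Or.inr ?_
        rcases hCsub hxC with h | h
        · exact absurd hxK (hC'E h).2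
        · exact h
      · exact Or.inl ⟨hCB ⟨hxC, hxK⟩, hxK⟩
    · rw [contract_ground']
      exact fun x hx => ⟨hC.1.subset_ground hx.1, hx.2⟩
  have heq := hC'.2 _ hdepCK hCK
  refine ⟨C, hC, heq ▸ diff_subset, fun x hx => ?_⟩
  by_cases hxK : x ∈ K
  · exact Or.inr hxK
  · exact Or.inl (heq ▸ ⟨hx, hxK⟩ : x ∈ C')


end Matroid

/-- A circuit and a cocircuit of a minor extend to a circuit and a cocircuit of the
whole matroid with the same intersection. -/
theorem stmt4 {α : Type*} (M M' : Matroid α) (hM' : M'.IsMinor₀ M)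
    (C' : Set α) (hC' : M'.Circuit C') (D' : Set α) (hD' : M'.Cocircuit D') :
    ∃ C D, M.Circuit C ∧ M.Cocircuit D ∧
      C ⊆ C' ∪ (M.E \ M'.E) ∧ D ⊆ D' ∪ (M.E \ M'.E) ∧ C ∩ D = C' ∩ D' := by
  obtain ⟨K, L, hKL, hKLE, rfl⟩ := hM'
  have hK : K ⊆ M.E := subset_union_left.trans hKLE
  have hL : L ⊆ M.E := subset_union_right.trans hKLE
  have hC'c : (M.contract₀ K).Circuit C' := hC'.of_delete
  obtain ⟨C, hC, hC'C, hCsub⟩ := Matroid.circuit_of_contract hK hC'c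
  have hD'c : ((M✶.delete₀ K).contract₀ L).Circuit D' := hD'
  have hLsub : L ⊆ (M✶.delete₀ K).E := by
    rw [Matroid.delete_ground', Matroid.dual_ground]
    exact subset_diff.mpr ⟨hL, hKL.symm⟩
  obtain ⟨D, hD, hD'D, hDsub⟩ := Matroid.circuit_of_contract hLsub hD'c
  have hDco : M.Cocircuit D := hD.of_delete
  have hC'E : C' ⊆ (M.E \ K) \ L := hC'.1.subset_ground
  have hD'E : D' ⊆ (M.E \ K) \ L := hD'.1.subset_ground
  have hKdiff : K ⊆ M.E \ ((M.contract₀ K).delete₀ L).E := fun x hx =>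
    ⟨hK hx, fun h => (show x ∈ (M.E \ K) \ L from h).1.2 hx⟩
  have hLdiff : L ⊆ M.E \ ((M.contract₀ K).delete₀ L).E := fun x hx =>
    ⟨hL hx, fun h => (show x ∈ (M.E \ K) \ L from h).2 hx⟩
  refine ⟨C, D, hC, hDco, hCsub.trans (union_subset_union_right _ hKdiff),
    hDsub.trans (union_subset_union_right _ hLdiff), ?_⟩
  apply subset_antisymm
  · rintro x ⟨hxC, hxD⟩
    rcases hCsub hxC with h1 | h1
    · rcases hDsub hxD with h2 | h2
      · exact ⟨h1, h2⟩
      · exact absurd h2 (hC'E h1).2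
    · rcases hDsub hxD with h2 | h2
      · exact absurd h1 (hD'E h2).1.2
      · exact (hKL.ne_of_mem h1 h2 rfl).elim
  · exact fun x hx => ⟨hC'C hx.1, hD'D hx.2⟩
end

section
/- For a matroid M and a set W ⊆ E(M), the following are equivalent: (1) W is a union of circuits of M; (2) W never meets a cocircuit of M in exactly one element; (3) W never meets any union of cocircuits of M in exactly one element. -/
open Set

namespace Matroid

variable {α : Type*} {M : Matroid α} {C D I W X Z : Set α} {e f : α}

/-- A set is a circuit iff it is dependent and all its one-element-deletions are
independent. -/
theorem circuit_iff_aux : M.Circuit C ↔ M.Dep C ∧ ∀ e ∈ C, M.Indep (C \ {e}) := by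
  constructor
  · rintro ⟨hd, hmin⟩
    refine ⟨hd, fun e he ↦ by_contra fun hi ↦ ?_⟩
    have hsub : C \ {e} ⊆ M.E := diff_subset.trans hd.subset_ground
    have hdep : M.Dep (C \ {e}) := (not_indep_iff hsub).1 hi
    rw [← hmin _ hdep diff_subset] at he
    exact he.2 rfl
  · rintro ⟨hd, h⟩
    refine ⟨hd, fun D hD hDC ↦ by_contra fun hne ↦ ?_⟩
    obtain ⟨e, heC, heD⟩ : ∃ e ∈ C, e ∉ D := by
      by_contra hcon; push_neg at hcon; exact hne (hDC.antisymm hcon)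
    exact hD.1 ((h e heC).subset (subset_diff_singleton hDC heD))

theorem Circuit.mem_closure_diff (hC : M.Circuit C) (he : e ∈ C) :
    e ∈ M.closure (C \ {e}) := by
  have hI : M.Indep (C \ {e}) := (circuit_iff_aux.1 hC).2 e he
  rw [hI.mem_closure_iff]
  left
  rw [insert_diff_singleton, insert_eq_of_mem he]
  exact hC.1

/-- Fundamental circuit existence. -/
theorem exists_circuit_of_mem_closure (hI : M.Indep I) (he : e ∈ M.closure I) (heI : e ∉ I) :
    ∃ C, M.Circuit C ∧ e ∈ C ∧ C ⊆ insert e I := by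
  have hne : {J | J ⊆ I ∧ e ∈ M.closure J}.Nonempty := ⟨I, rfl.subset, he⟩
  have hJ₀I : ⋂₀ {J | J ⊆ I ∧ e ∈ M.closure J} ⊆ I :=
    sInter_subset_of_mem (show I ∈ {J | J ⊆ I ∧ e ∈ M.closure J} from ⟨rfl.subset, he⟩)
  generalize hJ₀def : ⋂₀ {J | J ⊆ I ∧ e ∈ M.closure J} = J₀ at hJ₀I
  have hJ₀ : M.Indep J₀ := hI.subset hJ₀I
  have heJ₀ : e ∉ J₀ := fun h ↦ heI (hJ₀I h)
  have hecl : e ∈ M.closure J₀ := by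
    rw [← hJ₀def, hI.closure_sInter_eq_biInter_closure_of_forall_subset hne (fun J hJ ↦ hJ.1)]
    exact mem_iInter₂.2 fun J hJ ↦ hJ.2
  refine ⟨insert e J₀, circuit_iff_aux.2 ⟨hJ₀.insert_dep_iff.2 ⟨hecl, heJ₀⟩, ?_⟩,
    mem_insert _ _, insert_subset_insert hJ₀I⟩
  rintro x (rfl | hx)
  · rwa [insert_diff_self_of_notMem heJ₀]
  · have hxe : x ≠ e := fun h ↦ heJ₀ (h ▸ hx)
    have hJx : M.Indep (J₀ \ {x}) := hJ₀.subset diff_subset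
    have heJx : e ∉ J₀ \ {x} := fun h ↦ heJ₀ h.1
    have hind : M.Indep (insert e (J₀ \ {x})) := by
      rw [hJx.insert_indep_iff_of_notMem heJx]
      refine ⟨M.mem_ground_of_mem_closure hecl, fun hecl' ↦ ?_⟩
      have hsub := sInter_subset_of_mem (show J₀ \ {x} ∈ {J | J ⊆ I ∧ e ∈ M.closure J} from
          ⟨diff_subset.trans hJ₀I, hecl'⟩)
      rw [hJ₀def] at hsub
      exact (hsub hx).2 rfl
    rwa [← insert_diff_singleton_comm (Ne.symm hxe)]

/-- If `e` lies in the closure of `W \ {e}`, there is a circuit through `e` inside `W`. -/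
theorem exists_circuit_subset (hW : W ⊆ M.E) (heW : e ∈ W)
    (he : e ∈ M.closure (W \ {e})) : ∃ C, M.Circuit C ∧ e ∈ C ∧ C ⊆ W := by
  obtain ⟨I, hI⟩ := M.exists_isBasis (W \ {e}) (diff_subset.trans hW)
  have heI : e ∉ I := fun h ↦ (hI.subset h).2 rfl
  rw [← hI.closure_eq_closure] at he
  obtain ⟨C, hC, heC, hCss⟩ := exists_circuit_of_mem_closure hI.indep he heI
  exact ⟨C, hC, heC, hCss.trans (insert_subset heW (hI.subset.trans diff_subset))⟩

/-- If `e ∉ cl X`, there is a cocircuit through `e` avoiding `X`. -/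
theorem exists_cocircuit_avoiding (hX : X ⊆ M.E) (heE : e ∈ M.E)
    (he : e ∉ M.closure X) : ∃ D, M.Cocircuit D ∧ e ∈ D ∧ Disjoint D X := by
  obtain ⟨I, hI⟩ := M.exists_isBasis X hX
  have heI : e ∉ I := fun h ↦ he
    (by rw [← hI.closure_eq_closure]; exact M.subset_closure I hI.indep.subset_ground h)
  have heclI : e ∉ M.closure I := by rwa [hI.closure_eq_closure]
  have hins : M.Indep (insert e I) := by
    rw [hI.indep.insert_indep_iff_of_notMem heI]; exact ⟨heE, heclI⟩
  obtain ⟨B, hB, hssB⟩ := hins.exists_isBase_superset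
  have heB : e ∈ B := hssB (mem_insert _ _)
  set H : Set α := M.closure (B \ {e}) with hH
  have heH : e ∉ H := hB.indep.notMem_closure_sdiff_of_mem heB
  have hXH : X ⊆ H := by
    refine (hI.subset_closure).trans (M.closure_subset_closure ?_)
    exact subset_diff_singleton ((subset_insert _ _).trans hssB) heI
  have hHE : H ⊆ M.E := M.closure_subset_ground _
  set D : Set α := M.E \ H with hD
  have hDE : D ⊆ M✶.E := by rw [dual_ground]; exact diff_subset
  have hdep : M✶.Dep D := by
    rw [dep_iff, and_iff_left hDE, dual_indep_iff_exists']
    rintro ⟨-, B', hB', hdisj⟩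
    have hB'H : B' ⊆ H := fun x hx ↦ by
      have hxE := hB'.subset_ground hx
      by_contra hxH
      exact (disjoint_right.1 hdisj hx) ⟨hxE, hxH⟩
    have : M.E ⊆ H := by
      rw [← hB'.closure_eq, hH]
      calc M.closure B' ⊆ M.closure H := M.closure_subset_closure hB'H
        _ = M.closure (B \ {e}) := by rw [hH, closure_closure]
    exact heH (this heE)
  refine ⟨D, circuit_iff_aux.2 ⟨hdep, fun f hf ↦ ?_⟩, ⟨heE, heH⟩, disjoint_left.2
    (fun x hx hxX ↦ hx.2 (hXH hxX))⟩
  -- show D \ {f} is coindependent: exhibit a base disjoint from it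
  rw [dual_indep_iff_exists' ]
  refine ⟨diff_subset.trans hDE, ?_⟩
  rcases eq_or_ne f e with rfl | hfe
  · refine ⟨B, hB, disjoint_left.2 fun x hx hxB ↦ ?_⟩
    rcases eq_or_ne x f with rfl | hxf
    · exact hx.2 rfl
    · exact hx.1.2 (M.subset_closure (B \ {f}) (diff_subset.trans hB.subset_ground) ⟨hxB, hxf⟩)
  · have hfH : f ∉ H := hf.2
    have hfB : f ∉ B := fun h ↦ hfH
      (M.subset_closure (B \ {e}) (diff_subset.trans hB.subset_ground) ⟨h, hfe⟩)
    have hfI : M.Indep (insert f (B \ {e})) := by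
      rw [(hB.indep.subset diff_subset).insert_indep_iff_of_notMem (fun h ↦ hfB h.1)]
      exact ⟨hf.1, hfH⟩
    refine ⟨insert f (B \ {e}), hB.exchange_isBase_of_indep hfB hfI,
      disjoint_left.2 fun x hx hxB ↦ ?_⟩
    rcases hxB with rfl | hxB
    · exact hx.2 rfl
    · exact hx.1.2 (M.subset_closure (B \ {e}) (diff_subset.trans hB.subset_ground) hxB)

/-- A circuit and a cocircuit never meet in exactly one element. -/
theorem Circuit.inter_cocircuit_ne_singleton (hC : M.Circuit C) (hD : M.Cocircuit D) :
    C ∩ D ≠ {e} := by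
  intro h
  have he' : e ∈ C ∩ D := by rw [h]; exact rfl
  obtain ⟨heC, heD⟩ := he'
  have hCE : C ⊆ M.E := hC.1.subset_ground
  have hDE : D ⊆ M.E := by have := hD.1.subset_ground; rwa [dual_ground] at this
  have hCe : M.Indep (C \ {e}) := (circuit_iff_aux.1 hC).2 e heC
  have hCeD : C \ {e} ⊆ M.E \ D := fun x hx ↦
    ⟨hCE hx.1, fun hxD ↦ hx.2 (by simpa using (h ▸ ⟨hx.1, hxD⟩ : x ∈ ({e} : Set α)))⟩
  obtain ⟨B, hB, hCB⟩ := hCe.subset_isBasis_of_subset hCeD diff_subset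
  have hecl : e ∈ M.closure B := by
    rw [hB.closure_eq_closure]
    exact M.closure_subset_closure hCeD (hC.mem_closure_diff heC)
  -- D \ {e} is coindependent
  have hDe : M✶.Indep (D \ {e}) := (circuit_iff_aux.1 hD).2 e heD
  obtain ⟨-, B₀, hB₀, hdisj⟩ := dual_indep_iff_exists'.1 hDe
  have hB₀cl : B₀ ⊆ M.closure B := by
    intro x hxB₀
    rcases eq_or_ne x e with rfl | hxe
    · exact hecl
    · have hxD : x ∉ D := fun hxD ↦ disjoint_left.1 hdisj ⟨hxD, hxe⟩ hxB₀
      have : x ∈ M.E \ D := ⟨hB₀.subset_ground hxB₀, hxD⟩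
      exact hB.subset_closure this
  have hBsp : M.Spanning B := by
    rw [spanning_iff_closure_eq (hB.indep.subset_ground)]
    refine ((M.closure_subset_ground B)).antisymm ?_
    rw [← hB₀.closure_eq]
    calc M.closure B₀ ⊆ M.closure (M.closure B) := M.closure_subset_closure hB₀cl
      _ = M.closure B := M.closure_closure B
  have hBbase : M.IsBase B := hB.indep.isBase_of_spanning hBsp
  have : M✶.Indep D := by
    rw [dual_indep_iff_exists' ]
    exact ⟨hDE, B, hBbase, disjoint_left.2 fun x hxD hxB ↦ (hB.subset hxB).2 hxD⟩
  exact hD.1.1 this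

end Matroid

/-- A set is a union of circuits iff it never meets a cocircuit exactly once, iff it
never meets a union of cocircuits exactly once. -/
theorem stmt5 {α : Type*} (M : Matroid α) (W : Set α) (hW : W ⊆ M.E) :
    (M.Scrawl W ↔ ∀ D, M.Cocircuit D → ¬ ∃ e, W ∩ D = {e}) ∧
    (M.Scrawl W ↔ ∀ Z, M✶.Scrawl Z → ¬ ∃ e, W ∩ Z = {e}) := by
  -- (1) → (3)
  have h13 : M.Scrawl W → ∀ Z, M✶.Scrawl Z → ¬ ∃ e, W ∩ Z = {e} := by
    rintro ⟨S, hS, rfl⟩ Z ⟨T, hT, rfl⟩ ⟨e, he⟩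
    have he' : e ∈ ⋃₀ S ∩ ⋃₀ T := by rw [he]; exact rfl
    obtain ⟨heW, heZ⟩ := he'
    obtain ⟨C, hCS, heC⟩ := heW
    obtain ⟨D, hDT, heD⟩ := heZ
    refine (hS C hCS).inter_cocircuit_ne_singleton (hT D hDT) (e := e) ?_
    refine subset_antisymm ?_ (by simp [heC, heD])
    intro x hx
    exact he ▸ (⟨⟨C, hCS, hx.1⟩, ⟨D, hDT, hx.2⟩⟩ : x ∈ ⋃₀ S ∩ ⋃₀ T)
  -- (3) → (2)
  have h32 : (∀ Z, M✶.Scrawl Z → ¬ ∃ e, W ∩ Z = {e}) →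
      ∀ D, M.Cocircuit D → ¬ ∃ e, W ∩ D = {e} := by
    intro h D hD
    exact h D ⟨{D}, by simpa [Matroid.Cocircuit] using hD, by simp⟩
  -- (2) → (1)
  have h21 : (∀ D, M.Cocircuit D → ¬ ∃ e, W ∩ D = {e}) → M.Scrawl W := by
    intro h
    refine ⟨{C | M.Circuit C ∧ C ⊆ W}, fun C hC ↦ hC.1, subset_antisymm ?_ ?_⟩
    · intro e heW
      have hecl : e ∈ M.closure (W \ {e}) := by
        by_contra hecl
        obtain ⟨D, hD, heD, hdisj⟩ := Matroid.exists_cocircuit_avoiding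
          (Set.diff_subset.trans hW) (hW heW) hecl
        refine h D hD ⟨e, subset_antisymm (fun x hx ↦ ?_) (by simp [heW, heD])⟩
        by_contra hxe
        exact Set.disjoint_left.1 hdisj hx.2 ⟨hx.1, hxe⟩
      obtain ⟨C, hC, heC, hCW⟩ := Matroid.exists_circuit_subset hW heW hecl
      exact ⟨C, ⟨hC, hCW⟩, heC⟩
    · rintro e ⟨C, ⟨-, hCW⟩, heC⟩
      exact hCW heC
  exact ⟨⟨fun h ↦ h32 (h13 h), h21⟩, ⟨h13, fun h ↦ h21 (h32 h)⟩⟩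
end

section
/- Let M be a finite matroid such that every circuit-cocircuit intersection has even cardinality. Then for any finite family (C_i)_{i ∈ I} of circuits of M, the symmetric difference △_{i∈I} C_i is a disjoint union of circuits of M. -/
open Set

namespace Matroid

variable {α : Type*}

lemma aux_exists_circuit (M : Matroid α) [M.Finite] :
    ∀ (n : ℕ) (X : Set α), X.ncard ≤ n → M.Dep X → ∃ C, C ⊆ X ∧ M.Circuit C := by
  intro n
  induction n with
  | zero =>
    intro X hcard hX
    have hfin : X.Finite := M.set_finite X hX.subset_ground
    have : X = ∅ := by
      rw [← Set.ncard_eq_zero hfin]; omega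
    exact absurd (this ▸ hX.nonempty) (by simp)
  | succ n ih =>
    intro X hcard hX
    by_cases hmin : ∀ D, M.Dep D → D ⊆ X → D = X
    · exact ⟨X, subset_rfl, hX, hmin⟩
    · push_neg at hmin
      obtain ⟨D, hD, hDX, hne⟩ := hmin
      have hss : D ⊂ X := hDX.ssubset_of_ne hne
      have hfin : X.Finite := M.set_finite X hX.subset_ground
      have : D.ncard < X.ncard := Set.ncard_lt_ncard hss hfin
      obtain ⟨C, hCD, hC⟩ := ih D (by omega) hD
      exact ⟨C, hCD.trans hDX, hC⟩

lemma aux_dep_of_even (M : Matroid α) [M.Finite] (X : Set α) (hXE : X ⊆ M.E)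
    (hne : X.Nonempty)
    (h : ∀ D, M✶.Circuit D → Even (X ∩ D).ncard) : M.Dep X := by
  by_contra hdep
  have hX : M.Indep X := indep_of_not_dep hdep hXE
  obtain ⟨e, heX⟩ := hne
  obtain ⟨B, hB, hXB⟩ := Matroid.Indep.exists_isBase_superset hX
  set D₀ : Set α := M.E \ M.closure (B \ {e}) with hD₀
  have hecl : e ∉ M.closure (B \ {e}) := hB.indep.notMem_closure_sdiff_of_mem (hXB heX)
  -- D₀ is dependent in the dual
  have hD₀dep : M✶.Dep D₀ := by
    rw [dep_iff]
    constructor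
    · intro hind
      rw [dual_indep_iff_exists'] at hind
      obtain ⟨-, B', hB', hdisj⟩ := hind
      have hB'cl : B' ⊆ M.closure (B \ {e}) := by
        intro x hx
        by_contra hxc
        exact (hdisj.le_bot ⟨⟨hB'.subset_ground hx, hxc⟩, hx⟩ : x ∈ (∅ : Set α))
      have : M.E ⊆ M.closure (B \ {e}) := by
        rw [← hB'.closure_eq]
        exact (M.closure_subset_closure_of_subset_closure hB'cl)
      exact hecl (this (hXE heX))
    · exact fun x hx => hx.1
  obtain ⟨D, hDD₀, hD⟩ := aux_exists_circuit M✶ D₀.ncard D₀ le_rfl hD₀dep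
  have hXD : X ∩ D = {e} := by
    have hBD : ∀ x ∈ D, x ∈ B → x = e := by
      intro x hxD hxB
      by_contra hne'
      have : x ∈ B \ {e} := ⟨hxB, hne'⟩
      exact (hDD₀ hxD).2 (M.subset_closure (B \ {e})
        (fun y hy => hB.subset_ground hy.1) this)
    have heD : e ∈ D := by
      by_contra heD
      -- then D is disjoint from B, so D is dual-independent, contradiction
      have hdisj : Disjoint D B := by
        rw [Set.disjoint_left]
        intro x hxD hxB
        exact heD ((hBD x hxD hxB) ▸ hxD)
      exact hD.1.not_indep (dual_indep_iff_exists'.2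
        ⟨hD.1.subset_ground, B, hB, hdisj⟩)
    apply Set.Subset.antisymm
    · rintro x ⟨hxX, hxD⟩
      exact hBD x hxD (hXB hxX)
    · rintro x rfl
      exact ⟨heX, heD⟩
  have := h D hD
  rw [hXD] at this
  simp [Set.ncard_singleton] at this

lemma aux_main (M : Matroid α) [M.Finite]
    (heven : ∀ C D, M.Circuit C → M✶.Circuit D → Even (C ∩ D).ncard) :
    ∀ (n : ℕ) (X : Set α), X.ncard ≤ n → X ⊆ M.E →
      (∀ D, M✶.Circuit D → Even (X ∩ D).ncard) →
      ∃ S : Set (Set α), (∀ o ∈ S, M.Circuit o) ∧ S.PairwiseDisjoint id ∧ X = ⋃₀ S := by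
  intro n
  induction n with
  | zero =>
    intro X hcard hXE _
    have hfin : X.Finite := M.set_finite X hXE
    have : X = ∅ := by rw [← Set.ncard_eq_zero hfin]; omega
    exact ⟨∅, by simp, by simp [Set.PairwiseDisjoint], by simp [this]⟩
  | succ n ih =>
    intro X hcard hXE hX
    have hfin : X.Finite := M.set_finite X hXE
    rcases X.eq_empty_or_nonempty with rfl | hne
    · exact ⟨∅, by simp, by simp [Set.PairwiseDisjoint], by simp⟩
    have hdep : M.Dep X := aux_dep_of_even M X hXE hne hX
    obtain ⟨C, hCX, hC⟩ := aux_exists_circuit M X.ncard X le_rfl hdep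
    obtain ⟨e, heC⟩ := hC.1.nonempty
    set X' : Set α := X \ C with hX'
    have hX'ss : X' ⊂ X := by
      refine (diff_subset).ssubset_of_ne ?_
      intro hEq
      exact ((hEq ▸ (⟨hCX heC, heC⟩ : e ∈ X ∧ e ∈ C)) : e ∈ X' ∧ _).1.2 heC
    have hlt : X'.ncard < X.ncard := Set.ncard_lt_ncard hX'ss hfin
    have hX'even : ∀ D, M✶.Circuit D → Even (X' ∩ D).ncard := by
      intro D hD
      have hDfin : D.Finite := M.set_finite D hD.1.subset_ground
      have hsplit : X ∩ D = (X' ∩ D) ∪ (C ∩ D) := by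
        rw [hX']
        ext x
        constructor
        · rintro ⟨hx, hxD⟩
          by_cases hxC : x ∈ C
          · exact Or.inr ⟨hxC, hxD⟩
          · exact Or.inl ⟨⟨hx, hxC⟩, hxD⟩
        · rintro (⟨⟨hx, -⟩, hxD⟩ | ⟨hxC, hxD⟩)
          · exact ⟨hx, hxD⟩
          · exact ⟨hCX hxC, hxD⟩
      have hdisj : Disjoint (X' ∩ D) (C ∩ D) := by
        rw [Set.disjoint_left]
        rintro x ⟨⟨-, hxC⟩, -⟩ ⟨hxC', -⟩
        exact hxC hxC'
      have hcards : (X ∩ D).ncard = (X' ∩ D).ncard + (C ∩ D).ncard := by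
        rw [hsplit]
        exact Set.ncard_union_eq hdisj (hDfin.subset inter_subset_right)
          (hDfin.subset inter_subset_right)
      have h1 := hX D hD
      have h2 := heven C D hC hD
      rw [hcards, Nat.even_add] at h1
      exact h1.2 h2
    obtain ⟨S', hS'circ, hS'disj, hS'union⟩ := ih X' (by omega) (diff_subset.trans hXE) hX'even
    refine ⟨insert C S', ?_, ?_, ?_⟩
    · rintro o (rfl | ho)
      · exact hC
      · exact hS'circ o ho
    · refine hS'disj.insert ?_
      intro o hoS' _
      have ho : o ⊆ X' := hS'union ▸ (Set.subset_sUnion_of_mem hoS')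
      rw [Set.disjoint_left]
      intro x hxC hxo
      exact (ho hxo).2 hxC
    · rw [Set.sUnion_insert, ← hS'union, hX', Set.union_diff_cancel hCX]

lemma natCast_zmod_two (n : ℕ) : (n : ZMod 2) = if Odd n then 1 else 0 := by
  rcases Nat.even_or_odd n with h | h
  · rw [if_neg (Nat.not_odd_iff_even.mpr h)]
    exact (ZMod.natCast_eq_zero_iff n 2).mpr h.two_dvd
  · rw [if_pos h]
    obtain ⟨k, rfl⟩ := h
    push_cast
    rw [show ((2 : ZMod 2)) = 0 by decide]
    ring


end Matroid

/-- In a finite matroid all of whose circuit-cocircuit intersections are even, any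
symmetric difference of finitely many circuits is a disjoint union of circuits. -/
theorem stmt8 {α : Type*} (M : Matroid α) [M.Finite]
    (heven : ∀ C D, M.Circuit C → M.Cocircuit D → Even (C ∩ D).ncard)
    {ι : Type*} [Fintype ι] (C : ι → Set α) (hC : ∀ i, M.Circuit (C i)) :
    ∃ S : Set (Set α), (∀ o ∈ S, M.Circuit o) ∧ S.PairwiseDisjoint id ∧
      {e | Odd {i | e ∈ C i}.ncard} = ⋃₀ S := by
  classical
  set X : Set α := {e | Odd {i | e ∈ C i}.ncard} with hXdef
  have hXE : X ⊆ M.E := by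
    intro e he
    have hne : {i | e ∈ C i}.Nonempty := by
      rw [Set.nonempty_iff_ne_empty]
      intro h0
      have : Odd {i | e ∈ C i}.ncard := he
      rw [h0] at this
      simp at this
    obtain ⟨i, hi⟩ := hne
    exact (hC i).1.subset_ground hi
  have hXeven : ∀ D, M.Cocircuit D → Even (X ∩ D).ncard := by
    intro D hD
    have hDfin : D.Finite := M.set_finite D hD.1.subset_ground
    set Df : Finset α := hDfin.toFinset with hDf
    have hinter : ∀ (Y : Set α), Y ∩ D = ↑(Df.filter (· ∈ Y)) := by
      intro Y
      ext x
      simp [hDf, hDfin.mem_toFinset, and_comm]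
    have key : ((X ∩ D).ncard : ZMod 2) = ∑ i : ι, (((C i) ∩ D).ncard : ZMod 2) := by
      have step2 : ∀ e : α, (({i | e ∈ C i}.ncard : ZMod 2)) =
          ∑ i : ι, (if e ∈ C i then (1 : ZMod 2) else 0) := by
        intro e
        have hset : {i | e ∈ C i} = ↑(Finset.univ.filter (fun i => e ∈ C i)) := by
          ext i; simp
        rw [hset, Set.ncard_coe_finset, Finset.card_filter]
        push_cast
        exact Finset.sum_congr rfl fun i _ => by split_ifs <;> rfl
      have step3 : ∀ i : ι, (((C i) ∩ D).ncard : ZMod 2) =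
          ∑ e ∈ Df, (if e ∈ C i then (1 : ZMod 2) else 0) := by
        intro i
        rw [hinter (C i), Set.ncard_coe_finset, Finset.card_filter]
        push_cast
        exact Finset.sum_congr rfl fun e _ => by split_ifs <;> rfl
      rw [hinter X, Set.ncard_coe_finset, Finset.card_filter]
      push_cast
      calc (∑ x ∈ Df, if x ∈ X then (1 : ZMod 2) else 0)
          = ∑ e ∈ Df, ∑ i : ι, (if e ∈ C i then (1 : ZMod 2) else 0) := by
            refine Finset.sum_congr rfl fun e _ => ?_
            rw [← step2 e, Matroid.natCast_zmod_two]
            by_cases he : Odd {i | e ∈ C i}.ncard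
            · rw [if_pos he, if_pos (show e ∈ X from he)]
            · rw [if_neg he, if_neg (show e ∉ X from he)]
        _ = ∑ i : ι, ∑ e ∈ Df, (if e ∈ C i then (1 : ZMod 2) else 0) := Finset.sum_comm
        _ = ∑ i : ι, (((C i) ∩ D).ncard : ZMod 2) := by
            exact Finset.sum_congr rfl fun i _ => (step3 i).symm
    have hzero : ((X ∩ D).ncard : ZMod 2) = 0 := by
      rw [key]
      refine Finset.sum_eq_zero fun i _ => ?_
      exact (ZMod.natCast_eq_zero_iff _ 2).mpr (heven (C i) D (hC i) hD).two_dvd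
    obtain ⟨k, hk⟩ := (ZMod.natCast_eq_zero_iff _ 2).mp hzero
    exact ⟨k, by omega⟩
  have heven' : ∀ C D, M.Circuit C → M✶.Circuit D → Even (C ∩ D).ncard := heven
  obtain ⟨S, h1, h2, h3⟩ := Matroid.aux_main M heven' X.ncard X le_rfl hXE hXeven
  exact ⟨S, h1, h2, h3⟩
end

section
/- Let M be a tame matroid (every circuit-cocircuit intersection is finite) such that every circuit meets every cocircuit in an even number of elements. Then for every base B of M and every circuit C of M, C equals the symmetric difference △_{e ∈ C \ B} C_e of the fundamental circuits C_e of the elements e ∈ C \ B with respect to B; in particular, each element of E lies in only finitely many of these fundamental circuits. -/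
open Set

namespace MyAux
open Matroid

variable {α : Type*} {M : Matroid α} {B : Set α} {f : α}

/-- fundamental cocircuit facts -/
lemma fund_cocircuit (hB : M.IsBase B) (hf : f ∈ B) :
    (M✶.Dep (M.E \ M.closure (B \ {f})) ∧
      ∀ D', M✶.Dep D' → D' ⊆ M.E \ M.closure (B \ {f}) → D' = M.E \ M.closure (B \ {f})) ∧
    f ∈ M.E \ M.closure (B \ {f}) ∧ (M.E \ M.closure (B \ {f})) ∩ B = {f} := by
  set D := M.E \ M.closure (B \ {f}) with hD
  have hfE : f ∈ M.E := hB.subset_ground hf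
  have hfcl : f ∉ M.closure (B \ {f}) := hB.indep.notMem_closure_diff_of_mem hf
  have hfD : f ∈ D := ⟨hfE, hfcl⟩
  have hDB : D ∩ B = {f} := by
    ext b
    constructor
    · rintro ⟨⟨hbE, hbcl⟩, hbB⟩
      by_contra hbf
      exact hbcl (M.subset_closure (B \ {f}) (diff_subset.trans hB.subset_ground) ⟨hbB, hbf⟩)
    · rintro rfl; exact ⟨hfD, hf⟩
  refine ⟨⟨?_, ?_⟩, hfD, hDB⟩
  · rw [dual_dep_iff_forall]
    refine ⟨fun B' hB' ↦ ?_, diff_subset⟩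
    by_contra hne
    rw [not_nonempty_iff_eq_empty] at hne
    have hB'cl : B' ⊆ M.closure (B \ {f}) := by
      intro x hx
      by_contra hxcl
      exact (eq_empty_iff_forall_notMem.1 hne x) ⟨⟨hB'.subset_ground hx, hxcl⟩, hx⟩
    have : M.E ⊆ M.closure (B \ {f}) := by
      rw [← hB'.closure_eq]
      calc M.closure B' ⊆ M.closure (M.closure (B \ {f})) := M.closure_subset_closure hB'cl
        _ = M.closure (B \ {f}) := M.closure_closure _
    exact hfcl (this hfE)
  · intro D' hD' hsub
    by_contra hne
    obtain ⟨d, hdD, hdD'⟩ : (D \ D').Nonempty := by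
      rw [diff_nonempty]; exact fun h ↦ hne (hsub.antisymm h)
    have hdE : d ∈ M.E := hdD.1
    have hdcl : d ∉ M.closure (B \ {f}) := hdD.2
    -- the base insert d (B \ {f})
    have hBind : M.IsBase (insert d (B \ {f})) := by
      rcases eq_or_ne d f with rfl | hdf
      · rwa [insert_diff_singleton, insert_eq_self.2 hf]
      · have hdB : d ∉ B := by
          intro hdB
          have : d ∈ ({f} : Set α) := hDB ▸ ⟨hdD, hdB⟩
          exact hdf this
        refine hB.exchange_isBase_of_indep hdB ?_
        rw [(hB.indep.diff {f}).insert_indep_iff_of_notMem (fun h ↦ hdB h.1)]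
        exact ⟨hdE, hdcl⟩
    have : M✶.Indep D' := by
      rw [dual_indep_iff_exists' ]
      refine ⟨hsub.trans diff_subset, insert d (B \ {f}), hBind, ?_⟩
      rw [disjoint_comm, disjoint_iff_forall_ne]
      rintro x hx y hy rfl
      rcases hx with rfl | hx
      · exact hdD' hy
      · have : x ∈ M.closure (B \ {f}) :=
          M.subset_closure (B \ {f}) (diff_subset.trans hB.subset_ground) hx
        exact (hsub hy).2 this
    exact hD'.1 this

lemma even_pair {T : Set α} {e f : α} (hef : e ≠ f) (hT : T ⊆ {e, f})
    (hfin : T.Finite) (hev : Even T.ncard) : (e ∈ T ↔ f ∈ T) := by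
  constructor
  · intro he
    by_contra hfT
    have : T = {e} := by
      apply subset_antisymm _ (singleton_subset_iff.2 he)
      intro x hx
      rcases hT hx with rfl | rfl
      · rfl
      · exact absurd hx hfT
    rw [this, ncard_singleton] at hev
    simp at hev
  · intro hfm
    by_contra heT
    have : T = {f} := by
      apply subset_antisymm _ (singleton_subset_iff.2 hfm)
      intro x hx
      rcases hT hx with rfl | rfl
      · exact absurd hx heT
      · rfl
    rw [this, ncard_singleton] at hev
    simp at hev

end MyAux


/-- In a tame matroid with all circuit-cocircuit intersections even, every circuit is the
symmetric difference of the fundamental circuits of its elements outside a base; in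
particular each element lies in only finitely many of these fundamental circuits. -/
theorem stmt11 {α : Type*} (M : Matroid α) (htame : M.Tame)
    (heven : ∀ C D, M.Circuit C → M.Cocircuit D → Even (C ∩ D).ncard)
    (B : Set α) (hB : M.IsBase B) (C : Set α) (hC : M.Circuit C)
    (fc : α → Set α)
    (hfc : ∀ e ∈ C \ B, M.Circuit (fc e) ∧ e ∈ fc e ∧ fc e ⊆ insert e B) :
    (∀ f, {e | e ∈ C \ B ∧ f ∈ fc e}.Finite) ∧
    C = {f | Odd {e | e ∈ C \ B ∧ f ∈ fc e}.ncard} := by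
  have key : ∀ f, {e | e ∈ C \ B ∧ f ∈ fc e}.Finite ∧
      (Odd {e | e ∈ C \ B ∧ f ∈ fc e}.ncard ↔ f ∈ C) := by
    intro f
    by_cases hfB : f ∈ B
    · obtain ⟨hco, hfD, hDB⟩ := MyAux.fund_cocircuit hB hfB
      set D := M.E \ M.closure (B \ {f}) with hDdef
      have hcoc : M.Cocircuit D := hco
      have keyeq : {e | e ∈ C \ B ∧ f ∈ fc e} = (C \ B) ∩ D := by
        ext e
        simp only [mem_setOf_eq, mem_inter_iff, and_congr_right_iff]
        intro he
        obtain ⟨hcirc, hefc, hsubf⟩ := hfc e he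
        have hef : e ≠ f := fun h ↦ he.2 (h ▸ hfB)
        have hTsub : fc e ∩ D ⊆ {e, f} := by
          rintro x ⟨hx1, hx2⟩
          rcases hsubf hx1 with rfl | hxB
          · exact Or.inl rfl
          · exact Or.inr (hDB ▸ (⟨hx2, hxB⟩ : x ∈ D ∩ B))
        have hfin := htame _ _ hcirc hcoc
        have hev := heven _ _ hcirc hcoc
        have hiff := MyAux.even_pair hef hTsub hfin hev
        exact ⟨fun hffc ↦ (hiff.2 ⟨hffc, hfD⟩).2, fun heD ↦ (hiff.1 ⟨hefc, heD⟩).1⟩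
      have hCD : (C ∩ D).Finite := htame _ _ hC hcoc
      have hfin2 : ((C \ B) ∩ D).Finite :=
        hCD.subset (fun x hx ↦ ⟨hx.1.1, hx.2⟩)
      refine ⟨keyeq ▸ hfin2, ?_⟩
      have hsplit : C ∩ D = ((C \ B) ∩ D) ∪ (C ∩ {f}) := by
        ext x
        constructor
        · rintro ⟨hxC, hxD⟩
          by_cases hxB : x ∈ B
          · exact Or.inr ⟨hxC, hDB ▸ (⟨hxD, hxB⟩ : x ∈ D ∩ B)⟩
          · exact Or.inl ⟨⟨hxC, hxB⟩, hxD⟩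
        · rintro (⟨⟨h1, _⟩, h2⟩ | ⟨h1, h2⟩)
          · exact ⟨h1, h2⟩
          · exact ⟨h1, (mem_singleton_iff.1 h2) ▸ hfD⟩
      have hdisj : Disjoint ((C \ B) ∩ D) (C ∩ {f}) := by
        rw [disjoint_iff_forall_ne]
        rintro x ⟨⟨_, hxB⟩, _⟩ y ⟨_, hy⟩ rfl
        exact hxB ((mem_singleton_iff.1 hy) ▸ hfB)
      have hcard : (C ∩ D).ncard = ((C \ B) ∩ D).ncard + (C ∩ {f}).ncard := by
        rw [hsplit]
        exact ncard_union_eq hdisj hfin2 ((finite_singleton f).subset inter_subset_right)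
      have hevCD := heven _ _ hC hcoc
      rw [keyeq]
      by_cases hfC : f ∈ C
      · have hCf : C ∩ {f} = {f} := inter_eq_right.mpr (singleton_subset_iff.2 hfC)
        rw [hcard, hCf, ncard_singleton, Nat.even_add_one, Nat.not_even_iff_odd] at hevCD
        exact ⟨fun _ ↦ hfC, fun _ ↦ hevCD⟩
      · have hCf : C ∩ {f} = ∅ := by
          rw [eq_empty_iff_forall_notMem]
          rintro x ⟨hx1, hx2⟩
          exact hfC ((mem_singleton_iff.1 hx2) ▸ hx1)
        rw [hcard, hCf, ncard_empty, add_zero] at hevCD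
        exact ⟨fun hodd ↦ absurd hevCD (Nat.not_even_iff_odd.2 hodd), fun h ↦ absurd h hfC⟩
    · have hsub : {e | e ∈ C \ B ∧ f ∈ fc e} ⊆ {f} := by
        rintro e ⟨he, hffc⟩
        rcases (hfc e he).2.2 hffc with rfl | hfB'
        · rfl
        · exact absurd hfB' hfB
      refine ⟨(finite_singleton f).subset hsub, ?_⟩
      by_cases hfC : f ∈ C
      · have hmem : f ∈ {e | e ∈ C \ B ∧ f ∈ fc e} := ⟨⟨hfC, hfB⟩, (hfc f ⟨hfC, hfB⟩).2.1⟩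
        have heq : {e | e ∈ C \ B ∧ f ∈ fc e} = {f} :=
          hsub.antisymm (singleton_subset_iff.2 hmem)
        rw [heq, ncard_singleton]
        simp [hfC]
      · have heq : {e | e ∈ C \ B ∧ f ∈ fc e} = ∅ := by
          rw [eq_empty_iff_forall_notMem]
          intro e he
          obtain rfl := hsub he
          exact hfC he.1.1
        rw [heq, ncard_empty]
        simp [hfC]
  refine ⟨fun f ↦ (key f).1, ?_⟩
  ext f
  simp only [mem_setOf_eq]
  exact ((key f).2).symm
end

section
/- Let M be a matroid in which every circuit C satisfies: for every base B, C = △_{e ∈ C \ B} C_e (symmetric difference of fundamental circuits, in particular well-defined). Then every circuit of M meets every cocircuit of M in an even number of elements. -/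
open Set

namespace Matroid
variable {α : Type*}

lemma aux_fund (M : Matroid α) {B : Set α} (hB : M.IsBase B) {e : α} (heE : e ∈ M.E)
    (heB : e ∉ B) : ∃ C, M.Circuit C ∧ e ∈ C ∧ C ⊆ insert e B := by
  set S : Set (Set α) := {J | J ⊆ B ∧ e ∈ M.closure J} with hS
  have hBS : B ∈ S := ⟨Subset.rfl, by rw [hB.closure_eq]; exact heE⟩
  set K := ⋂₀ S with hK
  have hKB : K ⊆ B := sInter_subset_of_mem hBS
  have hKi : M.Indep K := hB.indep.subset hKB
  have heK : e ∉ K := fun h => heB (hKB h)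
  have hecl : e ∈ M.closure K := by
    rw [hB.indep.closure_sInter_eq_biInter_closure_of_forall_subset ⟨B, hBS⟩
      (fun J hJ => hJ.1)]
    exact mem_iInter₂.2 fun J hJ => hJ.2
  refine ⟨insert e K, ⟨(hKi.mem_closure_iff_of_notMem heK).1 hecl, ?_⟩,
    mem_insert _ _, insert_subset_insert hKB⟩
  intro D hD hDsub
  have heD : e ∈ D := by
    by_contra heD
    exact hD.not_indep (hKi.subset (fun x hx => ((hDsub hx).resolve_left
      (fun h => heD (h ▸ hx)))))
  have hKD : K ⊆ D := by
    intro x hxK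
    by_contra hxD
    have hDe : D \ {e} ⊆ K \ {x} := by
      intro y hy
      have := hDsub hy.1
      exact ⟨this.resolve_left hy.2, fun h => hxD (h ▸ hy.1)⟩
    have hecl' : e ∉ M.closure (K \ {x}) := by
      intro hcl
      have : K \ {x} ∈ S := ⟨(diff_subset).trans hKB, hcl⟩
      exact (mem_diff_singleton.1 (sInter_subset_of_mem this hxK)).2 rfl
    have heD' : e ∉ M.closure (D \ {e}) :=
      fun h => hecl' (M.closure_subset_closure hDe h)
    have hind : M.Indep (D \ {e}) := hKi.subset ((hDe).trans diff_subset)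
    have : M.Indep (insert e (D \ {e})) :=
      (hind.insert_indep_iff_of_notMem (fun h => h.2 rfl)).2 ⟨heE, heD'⟩
    rw [insert_diff_singleton, insert_eq_of_mem heD] at this
    exact hD.not_indep this
  exact hDsub.antisymm (insert_subset heD hKD)

lemma aux_mem_closure_diff {M : Matroid α} {C : Set α} (hC : M.Circuit C) {f : α}
    (hf : f ∈ C) : f ∈ M.closure (C \ {f}) := by
  have hind : M.Indep (C \ {f}) := by
    by_contra hdep
    have : M.Dep (C \ {f}) := ⟨hdep, diff_subset.trans hC.1.subset_ground⟩
    have := hC.2 _ this diff_subset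
    exact (this ▸ hf).2 rfl
  have := hC.1
  rw [show C = insert f (C \ {f}) by simp [hf]] at this
  exact (hind.insert_dep_iff.1 this).1

lemma aux_cocirc {M : Matroid α} {D : Set α} (hD : M✶.Circuit D) {g : α} (hg : g ∈ D)
    (hgcl : g ∈ M.closure (M.E \ D)) : False := by
  have hDE : D ⊆ M.E := hD.1.subset_ground
  have hindep : M✶.Indep (D \ {g}) := by
    by_contra hdep
    have : M✶.Dep (D \ {g}) := ⟨hdep, diff_subset.trans hDE⟩
    have := hD.2 _ this diff_subset
    exact (this ▸ hg).2 rfl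
  obtain ⟨-, B, hB, hdisj⟩ := dual_indep_iff_exists'.1 hindep
  have hBsub : B ⊆ insert g (M.E \ D) := by
    intro y hy
    by_cases hyD : y ∈ D
    · rcases eq_or_ne y g with rfl | hne
      · exact mem_insert _ _
      · exact absurd (show y ∈ D \ {g} from ⟨hyD, hne⟩) (disjoint_right.1 hdisj hy)
    · exact mem_insert_of_mem _ ⟨hB.subset_ground hy, hyD⟩
  have hspan : M.Spanning (M.E \ D) := by
    rw [spanning_iff_ground_subset_closure diff_subset]
    calc M.E = M.closure B := hB.closure_eq.symm
    _ ⊆ M.closure (insert g (M.E \ D)) := M.closure_subset_closure hBsub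
    _ ⊆ M.closure (M.closure (M.E \ D)) := M.closure_subset_closure
        (insert_subset hgcl (M.subset_closure _ diff_subset))
    _ = M.closure (M.E \ D) := M.closure_closure _
  obtain ⟨B', hB', hB'sub⟩ := hspan.exists_isBase_subset
  exact hD.1.not_indep (dual_indep_iff_exists'.2
    ⟨hDE, B', hB', disjoint_left.2 fun a haD haB' => (hB'sub haB').2 haD⟩)

lemma aux_ne_singleton {M : Matroid α} {C D : Set α} (hC : M.Circuit C)
    (hD : M✶.Circuit D) {f : α} (hf : C ∩ D = {f}) : False := by
  have hfC : f ∈ C := (hf.symm ▸ rfl : f ∈ C ∩ D).1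
  have hfD : f ∈ D := (hf.symm ▸ rfl : f ∈ C ∩ D).2
  have hsub : C \ {f} ⊆ M.E \ D := by
    intro y hy
    refine ⟨hC.1.subset_ground hy.1, fun hyD => hy.2 ?_⟩
    have : y ∈ C ∩ D := ⟨hy.1, hyD⟩
    rw [hf] at this; exact this
  exact aux_cocirc hD hfD (M.closure_subset_closure hsub (aux_mem_closure_diff hC hfC))

end Matroid


/-- If every circuit is the (well-defined) symmetric difference of the fundamental
circuits of its elements outside any base, then every circuit meets every cocircuit in
an even number of elements. -/
theorem stmt12 {α : Type*} (M : Matroid α)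
    (h : ∀ B, M.IsBase B → ∀ C, M.Circuit C → ∀ fc : α → Set α,
      (∀ e ∈ C \ B, M.Circuit (fc e) ∧ e ∈ fc e ∧ fc e ⊆ insert e B) →
      (∀ f, {e | e ∈ C \ B ∧ f ∈ fc e}.Finite) ∧
      C = {f | Odd {e | e ∈ C \ B ∧ f ∈ fc e}.ncard}) :
    ∀ C D, M.Circuit C → M.Cocircuit D → (C ∩ D).Finite ∧ Even (C ∩ D).ncard := by
  intro C D hC hD
  rcases (C ∩ D).eq_empty_or_nonempty with hCD | ⟨x, hxC, hxD⟩
  · rw [hCD]; simp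
  have hCE : C ⊆ M.E := hC.1.subset_ground
  have hDE : D ⊆ M.E := hD.1.subset_ground
  have hindep : M✶.Indep (D \ {x}) := by
    by_contra hdep
    have hd : M✶.Dep (D \ {x}) := ⟨hdep, diff_subset.trans hDE⟩
    have heq := hD.2 _ hd diff_subset
    have hnot : x ∉ D \ {x} := fun hh => hh.2 rfl
    rw [heq] at hnot
    exact hnot hxD
  obtain ⟨-, B, hB, hdisj⟩ := Matroid.dual_indep_iff_exists'.1 hindep
  have hBD : ∀ y, y ∈ B → y ∈ D → y = x := by
    intro y hyB hyD
    by_contra hne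
    exact absurd (show y ∈ D \ {x} from ⟨hyD, hne⟩) (disjoint_right.1 hdisj hyB)
  have hxB : x ∈ B := by
    by_contra hxB
    obtain ⟨Cx, hCx, hxCx, hCxsub⟩ := M.aux_fund hB (hCE hxC) hxB
    refine Matroid.aux_ne_singleton hCx hD (f := x) (subset_antisymm ?_ ?_)
    · rintro y ⟨hyCx, hyD⟩
      rcases mem_insert_iff.1 (hCxsub hyCx) with rfl | hyB
      · rfl
      · exact absurd ((hBD y hyB hyD) ▸ hyB) hxB
    · rintro y rfl; exact ⟨hxCx, hxD⟩
  have hfcall : ∀ e ∈ M.E \ B, ∃ Ce, M.Circuit Ce ∧ e ∈ Ce ∧ Ce ⊆ insert e B :=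
    fun e he => M.aux_fund hB he.1 he.2
  choose! fc hfc1 hfc2 hfc3 using hfcall
  have hmem : ∀ e ∈ C \ B, e ∈ M.E \ B := fun e he => ⟨hCE he.1, he.2⟩
  have hfcprop : ∀ e ∈ C \ B, M.Circuit (fc e) ∧ e ∈ fc e ∧ fc e ⊆ insert e B :=
    fun e he => ⟨hfc1 e (hmem e he), hfc2 e (hmem e he), hfc3 e (hmem e he)⟩
  obtain ⟨hfin, hCeq⟩ := h B hB C hC fc hfcprop
  have hfcD : ∀ e ∈ C \ B, fc e ∩ D ⊆ {e, x} := by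
    intro e he y hy
    rcases mem_insert_iff.1 (hfc3 e (hmem e he) hy.1) with rfl | hyB
    · exact Or.inl rfl
    · exact Or.inr (hBD y hyB hy.2)
  have hfiber : {e | e ∈ C \ B ∧ x ∈ fc e} = (C ∩ D) \ {x} := by
    apply subset_antisymm
    · rintro e ⟨heCB, hxfc⟩
      have hex : e ≠ x := fun h => heCB.2 (h ▸ hxB)
      refine ⟨⟨heCB.1, ?_⟩, hex⟩
      by_contra heD
      refine Matroid.aux_ne_singleton (hfc1 e (hmem e heCB)) hD (f := x)
        (subset_antisymm ?_ ?_)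
      · intro y hy
        rcases hfcD e heCB hy with rfl | rfl
        · exact absurd hy.2 heD
        · rfl
      · rintro y rfl; exact ⟨hxfc, hxD⟩
    · rintro e ⟨⟨heC, heD⟩, hex⟩
      have heB : e ∉ B := fun h => hex (hBD e h heD)
      refine ⟨⟨heC, heB⟩, ?_⟩
      by_contra hxfc
      refine Matroid.aux_ne_singleton (hfc1 e (hmem e ⟨heC, heB⟩)) hD (f := e)
        (subset_antisymm ?_ ?_)
      · intro y hy
        rcases hfcD e ⟨heC, heB⟩ hy with rfl | rfl
        · rfl
        · exact absurd hy.1 hxfc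
      · exact singleton_subset_iff.2 ⟨hfc2 e (hmem e ⟨heC, heB⟩), heD⟩
  have hodd : Odd ({e | e ∈ C \ B ∧ x ∈ fc e}).ncard := hCeq.subset hxC
  rw [hfiber] at hodd
  have hfinx := hfin x
  rw [hfiber] at hfinx
  have heq2 : C ∩ D = insert x ((C ∩ D) \ {x}) := by
    rw [insert_diff_singleton, insert_eq_of_mem (mem_inter hxC hxD)]
  constructor
  · rw [heq2]; exact hfinx.insert x
  · rw [heq2, ncard_insert_of_notMem (fun hh => hh.2 rfl) hfinx]
    exact hodd.add_one
end

section
/- Let M be a finite matroid representable over a field k. Then M is k-paintable: there exist functions c_C : C → k \ {0} for each circuit C and d_D : D → k \ {0} for each cocircuit D such that for every circuit C and cocircuit D, ∑_{e ∈ C ∩ D} c_C(e)·d_D(e) = 0. -/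
open Set

open Submodule

section Aux

variable {α k A : Type*} [Fintype α] [Field k]

omit [Fintype α] in
lemma aux_span_eq {M : Matroid α} {f : α → A → k}
    (hrep : ∀ I : Set α, M.Indep I ↔ LinearIndependent k (fun e : I => f e))
    {I S : Set α} (hIS : I ⊆ S) (hI : M.Indep I)
    (hmax : ∀ e ∈ S \ I, M.Dep (insert e I)) :
    span k (f '' S) = span k (f '' I) := by
  refine le_antisymm (span_le.2 ?_) (span_mono (Set.image_mono (f := f) hIS))
  rintro _ ⟨e, he, rfl⟩
  by_cases heI : e ∈ I
  · exact subset_span ⟨e, heI, rfl⟩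
  by_contra hfe
  exact (hmax e ⟨he, heI⟩).not_indep <| (hrep _).2 <|
    (linearIndepOn_insert heI).2 ⟨(hrep I).1 hI, hfe⟩

omit [Fintype α] in
lemma aux_spanning_iff {M : Matroid α} (hE : M.E = Set.univ) {f : α → A → k}
    (hrep : ∀ I : Set α, M.Indep I ↔ LinearIndependent k (fun e : I => f e))
    (S : Set α) :
    (∃ B, M.IsBase B ∧ B ⊆ S) ↔ span k (f '' S) = span k (f '' Set.univ) := by
  constructor
  · rintro ⟨B, hB, hBS⟩
    have h1 : span k (f '' (Set.univ : Set α)) = span k (f '' B) :=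
      aux_span_eq hrep (subset_univ B) hB.indep
        (fun e he => hB.insert_dep (by rw [hE]; exact ⟨he.1, he.2⟩))
    refine le_antisymm (span_mono (Set.image_mono (f := f) (subset_univ S))) ?_
    rw [h1]
    exact span_mono (Set.image_mono (f := f) hBS)
  · intro hsp
    obtain ⟨I, hI⟩ := M.exists_isBasis S (by rw [hE]; exact subset_univ S)
    have h1 : span k (f '' S) = span k (f '' I) :=
      aux_span_eq hrep hI.subset hI.indep (fun e he => hI.insert_dep he)
    refine ⟨I, ?_, hI.subset⟩
    refine hI.indep.isBase_of_forall_insert (fun e he hind => ?_)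
    rw [hE] at he
    have hli : LinearIndepOn k f _ := (hrep _).1 hind
    rw [linearIndepOn_insert he.2] at hli
    exact hli.2 (by rw [← h1, hsp]; exact subset_span ⟨e, mem_univ e, rfl⟩)

lemma aux_circuit {M : Matroid α} (hE : M.E = Set.univ) {f : α → A → k}
    (hrep : ∀ I : Set α, M.Indep I ↔ LinearIndependent k (fun e : I => f e))
    {C : Set α} (hC : M.Circuit C) :
    ∃ c : α → k, (∀ e ∈ C, c e ≠ 0) ∧ (∀ e ∉ C, c e = 0) ∧ ∑ e, c e • f e = 0 := by
  classical
  haveI : Fintype ↥C := Fintype.ofFinite _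
  have hnli : ¬ LinearIndependent k (fun e : C => f e) :=
    fun h => hC.1.not_indep ((hrep C).2 h)
  obtain ⟨g, hsum, i, hi⟩ := Fintype.not_linearIndependent_iff.1 hnli
  set c : α → k := fun e => if h : e ∈ C then g ⟨e, h⟩ else 0 with hc
  have hc0 : ∀ e ∉ C, c e = 0 := fun e he => dif_neg he
  have hcg : ∀ x : ↥C, c x = g x := fun x => dif_pos x.2
  have htot : ∑ e, c e • f e = 0 := by
    calc ∑ e, c e • f e = ∑ e ∈ C.toFinset, c e • f e :=
          (Finset.sum_subset (Finset.subset_univ _)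
            (fun e _ he => by rw [hc0 e (by simpa using he), zero_smul])).symm
      _ = ∑ x : ↥C, c x • f x :=
          Finset.sum_subtype _ (fun x => Set.mem_toFinset) _
      _ = ∑ x : ↥C, g x • f x := Finset.sum_congr rfl (fun x _ => by rw [hcg])
      _ = 0 := hsum
  set S : Set α := {e | c e ≠ 0} with hS
  have hSC : S ⊆ C := fun e he => by by_contra h; exact he (hc0 e h)
  have hSeq : S = C := by
    refine hC.2 S ?_ hSC
    rw [Matroid.dep_iff]
    refine ⟨fun hind => ?_, by rw [hE]; exact subset_univ _⟩
    haveI : Fintype ↥S := Fintype.ofFinite _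
    have hli := (hrep S).1 hind
    refine (Fintype.not_linearIndependent_iff.2 ?_) hli
    refine ⟨fun x => c x, ?_, ?_⟩
    · calc ∑ x : ↥S, c x • f x
          = ∑ e ∈ S.toFinset, c e • f e :=
            (Finset.sum_subtype (p := (· ∈ S)) S.toFinset
              (fun x => Set.mem_toFinset) (fun e => c e • f e)).symm
        _ = ∑ e, c e • f e :=
            Finset.sum_subset (Finset.subset_univ _)
              (fun e _ he => by
                have h0 : c e = 0 := by by_contra h; exact he (by simpa [hS] using h)
                rw [h0, zero_smul])
        _ = 0 := htot
    · have hiS : (i : α) ∈ S := by show c i ≠ 0; rw [hcg]; exact hi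
      exact ⟨⟨i, hiS⟩, hiS⟩
  refine ⟨c, fun e he => ?_, hc0, htot⟩
  rw [← hSeq] at he
  exact he

end Aux

section Aux2

variable {α k A : Type*} [Fintype α] [Field k]

omit [Fintype α] in
lemma aux_cocircuit {M : Matroid α} (hE : M.E = Set.univ) {f : α → A → k}
    (hrep : ∀ I : Set α, M.Indep I ↔ LinearIndependent k (fun e : I => f e))
    {D : Set α} (hD : M.Cocircuit D) :
    ∃ φ : (A → k) →ₗ[k] k, (∀ e ∈ D, φ (f e) ≠ 0) ∧ (∀ e ∉ D, φ (f e) = 0) := by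
  have hE' : M✶.E = Set.univ := by rw [Matroid.dual_ground, hE]
  set W : Submodule k (A → k) := span k (f '' Dᶜ) with hW
  set V : Submodule k (A → k) := span k (f '' Set.univ) with hV
  have hWV : W < V := by
    refine lt_of_le_of_ne (span_mono (Set.image_mono (f := f) (subset_univ _))) (fun hWV => ?_)
    obtain ⟨B, hB, hBD⟩ := (aux_spanning_iff hE hrep Dᶜ).2 hWV
    refine hD.1.not_indep ?_
    rw [Matroid.dual_indep_iff_exists']
    exact ⟨by rw [hE]; exact subset_univ _,
      B, hB, (subset_compl_iff_disjoint_right.1 hBD).symm⟩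
  obtain ⟨x, hxV, hxW⟩ := SetLike.exists_of_lt hWV
  have hq : Submodule.Quotient.mk (p := W) x ≠ 0 :=
    fun h => hxW ((Submodule.Quotient.mk_eq_zero W).1 h)
  have : ¬ ∀ ψ : Module.Dual k ((A → k) ⧸ W), ψ (Submodule.Quotient.mk x) = 0 := by
    rw [Module.forall_dual_apply_eq_zero_iff k]
    exact hq
  push_neg at this
  obtain ⟨ψ, hψ⟩ := this
  refine ⟨ψ.comp W.mkQ, fun e he => ?_, fun e he => ?_⟩
  · intro h0
    have hker : V ≤ LinearMap.ker (ψ.comp W.mkQ) := by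
      have hDe : ¬ M✶.Dep (D \ {e}) := by
        intro hdep
        have := hD.2 _ hdep diff_subset
        exact (this ▸ (fun (h : e ∈ D \ {e}) => h.2 rfl)) he
      have hind : M✶.Indep (D \ {e}) :=
        (Matroid.not_dep_iff (by rw [hE']; exact subset_univ _)).1 hDe
      rw [Matroid.dual_indep_iff_exists'] at hind
      obtain ⟨-, B, hB, hdisj⟩ := hind
      have hBsub : B ⊆ Dᶜ ∪ {e} := by
        intro x hx
        by_cases hxD : x ∈ D
        · by_cases hxe : x = e
          · exact Or.inr hxe
          · exact absurd (hdisj.symm.ne_of_mem hx ⟨hxD, hxe⟩ rfl) (fun h => h)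
        · exact Or.inl hxD
      have hsp : span k (f '' (Dᶜ ∪ {e})) = V :=
        (aux_spanning_iff hE hrep _).1 ⟨B, hB, hBsub⟩
      rw [← hsp]
      rw [span_le]
      rintro _ ⟨y, hy, rfl⟩
      rcases hy with hy | hy
      · simp only [SetLike.mem_coe, LinearMap.mem_ker, LinearMap.comp_apply]
        rw [Submodule.mkQ_apply, (Submodule.Quotient.mk_eq_zero W).2
          (subset_span ⟨y, hy, rfl⟩), map_zero]
      · rcases hy with rfl
        simpa using h0
    exact hψ (hker hxV)
  · have hfW : f e ∈ W := subset_span ⟨e, he, rfl⟩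
    simp only [LinearMap.comp_apply, Submodule.mkQ_apply]
    rw [(Submodule.Quotient.mk_eq_zero W).2 hfW, map_zero]

end Aux2


/-- Every finite matroid representable over a field `k` is `k`-paintable. -/
theorem stmt13 {α : Type*} [Fintype α] {k : Type*} [Field k]
    (M : Matroid α) (hE : M.E = Set.univ)
    {A : Type*} (f : α → A → k)
    (hrep : ∀ I : Set α, M.Indep I ↔ LinearIndependent k (fun e : I => f e)) :
    ∃ c d : Set α → α → k, M.IsPainting c d := by
  classical
  choose! c hc1 hc2 hc3 using fun C (hC : M.Circuit C) => aux_circuit hE hrep hC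
  choose! φ hφ1 hφ2 using fun D (hD : M.Cocircuit D) => aux_cocircuit hE hrep hD
  refine ⟨c, fun D e => φ D (f e), ?_, ?_, ?_⟩
  · exact hc1
  · exact hφ1
  · intro C D hC hD
    refine ⟨(C ∩ D).toFinite, ?_⟩
    have hfin : Fintype ↥(C ∩ D) := Fintype.ofFinite _
    calc ∑ᶠ e ∈ C ∩ D, c C e * φ D (f e)
        = ∑ e ∈ (C ∩ D).toFinite.toFinset, c C e * φ D (f e) :=
          finsum_mem_eq_finite_toFinset_sum _ _
      _ = ∑ e, c C e * φ D (f e) := by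
          refine Finset.sum_subset (Finset.subset_univ _) (fun e _ he => ?_)
          rw [Set.Finite.mem_toFinset] at he
          by_cases heC : e ∈ C
          · have heD : e ∉ D := fun h => he ⟨heC, h⟩
            rw [hφ2 D hD e heD, mul_zero]
          · rw [hc2 C hC e heC, zero_mul]
      _ = ∑ e, φ D (c C e • f e) := by
          refine Finset.sum_congr rfl (fun e _ => ?_)
          rw [map_smul, smul_eq_mul]
      _ = φ D (∑ e, c C e • f e) := (map_sum _ _ _).symm
      _ = 0 := by rw [hc3 C hC, map_zero]
end

section
/- Let M be a matroid with a k-painting, and let M' = M / C \ D be a minor with an induced k-painting. If O' is a circuit of M' and O a circuit of M with O' ⊆ O ⊆ O' ∪ C such that the painting of M' is induced by that of M, then there is a nonzero λ ∈ k with c_O restricted to O' equal to λ · c'_{O'}. -/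
open Set

namespace Matroid

variable {α : Type*}

/-- A circuit of a restriction is a circuit of the original matroid. -/
lemma Circuit.of_restrict {M : Matroid α} {R C : Set α} (hR : R ⊆ M.E)
    (hC : (M ↾ R).Circuit C) : M.Circuit C := by
  obtain ⟨hdep, hmin⟩ := hC
  rw [restrict_dep_iff] at hdep
  refine ⟨⟨hdep.1, hdep.2.trans hR⟩, fun D hD hDC => ?_⟩
  exact hmin D (restrict_dep_iff.mpr ⟨hD.not_indep, hDC.trans hdep.2⟩) hDC

/-- Circuit minus an element is independent. -/
lemma Circuit.diff_singleton_indep {M : Matroid α} {C : Set α} (hC : M.Circuit C)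
    {e : α} (he : e ∈ C) : M.Indep (C \ {e}) := by
  by_contra h
  have hd : M.Dep (C \ {e}) := ⟨h, diff_subset.trans hC.1.subset_ground⟩
  have := hC.2 _ hd diff_subset
  exact (this ▸ (fun (hx : e ∈ C \ ({e} : Set α)) => hx.2 rfl)) he

/-- Each element of a circuit lies in the closure of the rest. -/
lemma Circuit.mem_closure_diff_singleton {M : Matroid α} {C : Set α} (hC : M.Circuit C)
    {e : α} (he : e ∈ C) : e ∈ M.closure (C \ {e}) := by
  by_contra h
  have hi := hC.diff_singleton_indep he
  rw [Matroid.Indep.notMem_closure_iff hi (hC.1.subset_ground he)] at h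
  have : M.Indep C := by
    have := h.1
    rwa [insert_diff_singleton, insert_eq_of_mem he] at this
  exact hC.1.not_indep this

/-- For a circuit `C` and two distinct elements `e f ∈ C` there is a cocircuit meeting
`C` exactly in `{e, f}`. -/
lemma Circuit.exists_cocircuit_pair {M : Matroid α} {C : Set α} (hC : M.Circuit C)
    {e f : α} (he : e ∈ C) (hf : f ∈ C) (hef : e ≠ f) :
    ∃ D, M.Cocircuit D ∧ C ∩ D = {e, f} := by
  have hCE : C ⊆ M.E := hC.1.subset_ground
  have hif : M.Indep (C \ {f}) := hC.diff_singleton_indep hf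
  obtain ⟨B, hB, hCB⟩ := Matroid.Indep.exists_isBase_superset hif
  have heB : e ∈ B := hCB ⟨he, hef⟩
  have hfB : f ∉ B := by
    intro hfB
    refine hC.1.not_indep (hB.indep.subset fun x hx => ?_)
    by_cases hxf : x = f
    · exact hxf ▸ hfB
    · exact hCB ⟨hx, hxf⟩
  set H := M.closure (B \ {e}) with hH
  have hBe_indep : M.Indep (B \ {e}) := hB.indep.subset diff_subset
  have heH : e ∉ H := Matroid.Indep.notMem_closure_diff_of_mem hB.indep heB
  have hfH : f ∉ H := by
    intro hfH
    -- e ∈ closure (C \ {e}) ⊆ closure (insert f (B \ {e})) = H, contradiction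
    have h1 : C \ {e} ⊆ insert f (B \ {e}) := by
      rintro x ⟨hxC, hxe⟩
      by_cases hxf : x = f
      · exact hxf ▸ mem_insert _ _
      · exact subset_insert _ _ ⟨hCB ⟨hxC, hxf⟩, hxe⟩
    have h2 : e ∈ M.closure (insert f (B \ {e})) :=
      M.closure_subset_closure h1 (hC.mem_closure_diff_singleton he)
    have h3 : insert f (B \ {e}) ⊆ H := insert_subset hfH (M.subset_closure _
      (diff_subset.trans hB.subset_ground))
    have h4 : M.closure (insert f (B \ {e})) ⊆ H := by
      rw [hH]
      calc M.closure (insert f (B \ {e})) ⊆ M.closure H := M.closure_subset_closure h3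
        _ = H := M.closure_closure _
    exact heH (h4 h2)
  have hdep : M✶.Dep (M.E \ H) := by
    rw [dual_dep_iff_forall]
    refine ⟨fun B' hB' => ?_, diff_subset⟩
    by_contra hne
    rw [not_nonempty_iff_eq_empty] at hne
    have hB'H : B' ⊆ H := fun x hx => by
      by_contra hxH
      exact (eq_empty_iff_forall_notMem.mp hne x) ⟨⟨hB'.subset_ground hx, hxH⟩, hx⟩
    have : M.E ⊆ H := by
      rw [← hB'.closure_eq]
      calc M.closure B' ⊆ M.closure H := M.closure_subset_closure hB'H
        _ = H := M.closure_closure _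
    exact heH (this (hCE he))
  have hmin : ∀ D0, M✶.Dep D0 → D0 ⊆ M.E \ H → D0 = M.E \ H := by
    intro D0 hD0 hD0D
    refine hD0D.antisymm fun x hx => ?_
    by_contra hxD0
    -- B' = insert x (B \ {e}) is a base disjoint from D0
    have hxE : x ∈ M.E := hx.1
    have hxH : x ∉ H := hx.2
    have hBi : M.Indep (insert x (B \ {e})) := by
      rw [Matroid.Indep.insert_indep_iff hBe_indep]
      exact Or.inl ⟨hxE, hxH⟩
    have hxcl : x ∈ M.closure (insert e (B \ {e})) \ M.closure (B \ {e}) := by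
      constructor
      · rw [insert_diff_singleton, insert_eq_of_mem heB, hB.closure_eq]
        exact hxE
      · exact hxH
    have hecl : e ∈ M.closure (insert x (B \ {e})) := (M.closure_exchange hxcl).1
    have hB'base : M.IsBase (insert x (B \ {e})) := by
      refine Matroid.Indep.isBase_of_ground_subset_closure hBi ?_
      have hBsub : B ⊆ M.closure (insert x (B \ {e})) := by
        intro b hb
        by_cases hbe : b = e
        · exact hbe ▸ hecl
        · exact M.subset_closure _ (insert_subset hxE
            (diff_subset.trans hB.subset_ground)) (subset_insert _ _ ⟨hb, hbe⟩)
      calc M.E = M.closure B := hB.closure_eq.symm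
        _ ⊆ M.closure (M.closure (insert x (B \ {e}))) := M.closure_subset_closure hBsub
        _ = M.closure (insert x (B \ {e})) := M.closure_closure _
    have := (dual_dep_iff_forall.mp hD0).1 _ hB'base
    obtain ⟨y, hyD0, hyB'⟩ := this
    rcases hyB' with rfl | hyB
    · exact hxD0 hyD0
    · exact (hD0D hyD0).2 (M.subset_closure _ (diff_subset.trans hB.subset_ground) hyB)
  refine ⟨M.E \ H, ⟨hdep, hmin⟩, ?_⟩
  · apply Subset.antisymm
    · rintro x ⟨hxC, -, hxH⟩
      by_contra hxef
      rw [mem_insert_iff, mem_singleton_iff] at hxef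
      push_neg at hxef
      exact hxH (M.subset_closure _ (diff_subset.trans hB.subset_ground)
        ⟨hCB ⟨hxC, hxef.2⟩, hxef.1⟩)
    · rintro x (rfl | rfl)
      · exact ⟨he, hCE he, heH⟩
      · exact ⟨hf, hCE hf, hfH⟩

end Matroid

/-- If a painting of a minor is induced by a painting of the whole matroid, then on any
circuit `O'` of the minor, the coefficients coming from any lift `O` of `O'` agree with
the minor's coefficients up to a nonzero scalar. -/
theorem stmt16 {α : Type*} {k : Type*} [Field k] (M : Matroid α) (Cs Ds : Set α)
    (c d : Set α → α → k) (hpaint : M.IsPainting c d)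
    (M' : Matroid α) (hM' : M' = (M.contract' Cs).delete' Ds)
    (c' d' : Set α → α → k) (hpaint' : M'.IsPainting c' d')
    (hindc : ∀ o', M'.Circuit o' → ∃ o, M.Circuit o ∧ o' ⊆ o ∧ o ⊆ o' ∪ Cs ∧
      ∀ e ∈ o', c' o' e = c o e)
    (hindd : ∀ b', M'.Cocircuit b' → ∃ b, M.Cocircuit b ∧ b' ⊆ b ∧ b ⊆ b' ∪ Ds ∧
      ∀ e ∈ b', d' b' e = d b e)
    (O' : Set α) (hO' : M'.Circuit O')
    (O : Set α) (hO : M.Circuit O) (hsub : O' ⊆ O) (hsub' : O ⊆ O' ∪ Cs) :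
    ∃ l : k, l ≠ 0 ∧ ∀ e ∈ O', c O e = l * c' O' e := by
  classical
  -- `O'` is a circuit of `M.contract' Cs`
  have hO'c : (M.contract' Cs).Circuit O' := by
    have h1 : ((M.contract' Cs).restrict ((M.contract' Cs).E \ Ds)).Circuit O' := by
      rw [hM', Matroid.delete'] at hO'; exact hO'
    exact Matroid.Circuit.of_restrict diff_subset h1
  -- cocircuits of the contraction are cocircuits of `M` disjoint from `Cs`
  have cocirc_contract : ∀ D', (M.contract' Cs).Cocircuit D' →
      M.Cocircuit D' ∧ Disjoint D' Cs := by
    intro D' hD'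
    have h1 : (M.contract' Cs)✶ = M✶.delete' Cs := by
      rw [Matroid.contract', Matroid.dual_dual]
    rw [Matroid.Cocircuit, h1, Matroid.delete'] at hD'
    have h3 : D' ⊆ M✶.E \ Cs := by
      have := hD'.1.subset_ground
      rwa [Matroid.restrict_ground_eq] at this
    exact ⟨Matroid.Circuit.of_restrict diff_subset hD',
      disjoint_left.mpr fun x hx => (h3 hx).2⟩
  obtain ⟨o, ho, hO'o, hoCs, hagree⟩ := hindc O' hO'
  obtain ⟨e0, he0⟩ := hO'.1.nonempty
  have hc0 : c O e0 ≠ 0 := hpaint.1 O hO e0 (hsub he0)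
  have hc'0 : c' O' e0 ≠ 0 := hpaint'.1 O' hO' e0 he0
  refine ⟨c O e0 * (c' O' e0)⁻¹, mul_ne_zero hc0 (inv_ne_zero hc'0), fun e he => ?_⟩
  by_cases hee0 : e = e0
  · subst hee0; field_simp
  have hne : e0 ≠ e := fun h => hee0 h.symm
  obtain ⟨D, hDco, hO'D⟩ := hO'c.exists_cocircuit_pair he0 he hne
  obtain ⟨hDM, hDCs⟩ := cocirc_contract D hDco
  have he0D : e0 ∈ D := by
    have : e0 ∈ O' ∩ D := by rw [hO'D]; exact mem_insert _ _
    exact this.2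
  have heD : e ∈ D := by
    have : e ∈ O' ∩ D := by rw [hO'D]; exact subset_insert _ _ rfl
    exact this.2
  -- `O ∩ D = {e0, e}` and `o ∩ D = {e0, e}`
  have trace : ∀ W : Set α, O' ⊆ W → W ⊆ O' ∪ Cs → W ∩ D = {e0, e} := by
    intro W hW1 hW2
    apply Subset.antisymm
    · rintro x ⟨hxW, hxD⟩
      rcases hW2 hxW with hxO' | hxCs
      · rw [← hO'D]; exact ⟨hxO', hxD⟩
      · exact absurd hxCs (hDCs.subset_compl_right hxD)
    · rintro x (rfl | rfl)
      · exact ⟨hW1 he0, he0D⟩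
      · exact ⟨hW1 he, heD⟩
  have hsum1 := (hpaint.2.2 O D hO hDM).2
  rw [trace O hsub hsub', finsum_mem_pair hne] at hsum1
  have hsum2 := (hpaint.2.2 o D ho hDM).2
  rw [trace o hO'o hoCs, finsum_mem_pair hne, ← hagree e0 he0, ← hagree e he] at hsum2
  have hd1 : d D e ≠ 0 := hpaint.2.1 D hDM e heD
  have key : c O e * (c' O' e0 * d D e) = c O e0 * c' O' e * d D e := by
    linear_combination c' O' e0 * hsum1 - c O e0 * hsum2
  field_simp
  exact mul_right_cancel₀ hd1 (by linear_combination key)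
end
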